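/- Concentration of sample count: among the first T = 2k - 4*sqrt(k) - 2*k^{2/3} items of a sequence of paired coin flips (where within each pair exactly one flip is 'sample', and flips from different pairs are independent), the probability that there are at least k - 2*sqrt(k) 'samples' among the first T items is at most 2 * exp(-k^{1/3}/4). -/

import Mathlib

open Finset in
lemma tail_bound' {α : Type*} [DecidableEq α] (S : Finset α) (t : ℝ) (ht : 0 ≤ t)
    (hm : 1 ≤ S.card) :
    ((S.powerset.filter (fun A => (S.card : ℝ)/2 + t ≤ (A.card : ℝ))).card : ℝ)
      ≤ 2 ^ S.card * Real.exp (-2 * t^2 / S.card) := by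
  set m := S.card with hmdef
  have hm0 : (0:ℝ) < m := by exact_mod_cast hm
  set lam : ℝ := 4*t/m with hlam
  have hlam0 : 0 ≤ lam := by positivity
  have hsum : ∑ A ∈ S.powerset, Real.exp (lam * A.card) = (Real.exp lam + 1)^m := by
    have := Finset.prod_add (fun _ : α => Real.exp lam) (fun _ : α => (1:ℝ)) S
    simp only [prod_const, prod_const_one, mul_one] at this
    rw [this]
    refine Finset.sum_congr rfl fun A _ => ?_
    rw [mul_comm, Real.exp_nat_mul]; simp
  have hcard : ((S.powerset.filter (fun A => (m : ℝ)/2 + t ≤ (A.card : ℝ))).card : ℝ)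
      * Real.exp (lam * (m/2 + t)) ≤ (Real.exp lam + 1)^m := by
    rw [← hsum]
    calc ((S.powerset.filter (fun A => (m : ℝ)/2 + t ≤ (A.card : ℝ))).card : ℝ)
          * Real.exp (lam * (m/2 + t))
        ≤ ∑ A ∈ S.powerset.filter (fun A => (m : ℝ)/2 + t ≤ (A.card : ℝ)),
            Real.exp (lam * A.card) := by
          rw [← nsmul_eq_mul]
          refine Finset.card_nsmul_le_sum _ _ _ fun A hA => ?_
          rw [mem_filter] at hA
          exact Real.exp_le_exp.mpr (mul_le_mul_of_nonneg_left hA.2 hlam0)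
      _ ≤ ∑ A ∈ S.powerset, Real.exp (lam * A.card) :=
          Finset.sum_le_sum_of_subset_of_nonneg (filter_subset _ _)
            (fun _ _ _ => (Real.exp_pos _).le)
  have hcosh : Real.exp lam + 1 ≤ 2 * Real.exp (lam/2 + lam^2/8) := by
    have h1 : Real.exp lam + 1 = 2 * Real.exp (lam/2) * Real.cosh (lam/2) := by
      rw [Real.cosh_eq]
      have a : Real.exp (lam/2) * Real.exp (lam/2) = Real.exp lam := by
        rw [← Real.exp_add]; ring_nf
      have b : Real.exp (lam/2) * Real.exp (-(lam/2)) = 1 := by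
        rw [← Real.exp_add]; simp
      nlinarith [a, b]
    have h2 : Real.cosh (lam/2) ≤ Real.exp ((lam/2)^2/2) := Real.cosh_le_exp_half_sq _
    rw [h1, Real.exp_add]
    have : (lam/2)^2/2 = lam^2/8 := by ring
    rw [← this]
    nlinarith [Real.exp_pos (lam/2), Real.exp_pos ((lam/2)^2/2), Real.cosh_pos (lam/2)]
  have hpow : (Real.exp lam + 1)^m ≤ (2 * Real.exp (lam/2 + lam^2/8))^m := by
    exact pow_le_pow_left₀ (by positivity) hcosh m
  have hfin : ((S.powerset.filter (fun A => (m : ℝ)/2 + t ≤ (A.card : ℝ))).card : ℝ)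
      ≤ (2 * Real.exp (lam/2 + lam^2/8))^m * Real.exp (-(lam * (m/2 + t))) := by
    rw [Real.exp_neg, ← div_eq_mul_inv, le_div_iff₀ (Real.exp_pos _)]
    exact hcard.trans hpow
  calc ((S.powerset.filter (fun A => (m : ℝ)/2 + t ≤ (A.card : ℝ))).card : ℝ)
      ≤ (2 * Real.exp (lam/2 + lam^2/8))^m * Real.exp (-(lam * (m/2 + t))) := hfin
    _ = 2^m * Real.exp (m * (lam/2 + lam^2/8) - lam * (m/2 + t)) := by
        rw [mul_pow, ← Real.exp_nat_mul, mul_assoc, ← Real.exp_add, ← sub_eq_add_neg]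
    _ = 2^m * Real.exp (-2 * t^2 / m) := by
        congr 1
        have : (m:ℝ) * (lam/2 + lam^2/8) - lam * (m/2 + t) = -2 * t^2 / m := by
          rw [hlam]; field_simp; ring
        rw [this]

set_option maxHeartbeats 1000000 in
open Classical in
theorem stmt19 (n k T : ℕ)
    (hT : (T : ℝ) ≤ 2*k - 4*Real.sqrt k - 2*(k:ℝ) ^ ((2:ℝ)/3))
    (σ : Fin (2*n) → Fin (2*n)) (hσ : ∀ j, σ (σ j) = j) (hσ' : ∀ j, σ j ≠ j)
    (L : Finset (Fin (2*n) → Bool))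
    (hL : L = Finset.univ.filter (fun ℓ => ∀ j, ℓ (σ j) = !(ℓ j))) :
    ((L.filter (fun ℓ => (k:ℝ) - 2*Real.sqrt k ≤
        ((Finset.univ.filter (fun j : Fin (2*n) => (j:ℕ) < T ∧ ℓ j = true)).card : ℝ))).card : ℝ)
      / 2 ^ n ≤ 2 * Real.exp (-(k:ℝ) ^ ((1:ℝ)/3) / 4) := by
  classical
  set t : ℝ := (k:ℝ) ^ ((2:ℝ)/3) with ht_def
  have ht0 : 0 ≤ t := Real.rpow_nonneg (Nat.cast_nonneg k) _
  have hsqrt0 : 0 ≤ Real.sqrt k := Real.sqrt_nonneg _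
  set Items : Finset (Fin (2*n)) := Finset.univ.filter (fun j => (j:ℕ) < T) with hItems
  set Bitems : Finset (Fin (2*n)) := Items.filter (fun j => ((σ j : ℕ) < T)) with hBitems
  set Citems : Finset (Fin (2*n)) := Items.filter (fun j => ¬ ((σ j : ℕ) < T)) with hCitems
  set R : Finset (Fin (2*n)) := Finset.univ.filter (fun j => (j:ℕ) < ((σ j : ℕ))) with hR
  set D : Finset (Fin (2*n)) := R.filter (fun r => r ∉ Citems ∧ σ r ∉ Citems) with hD
  set Bad : Finset (Finset (Fin (2*n))) :=
    Citems.powerset.filter (fun A => (Citems.card : ℝ)/2 + t ≤ (A.card : ℝ)) with hBad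
  set bad : Finset (Fin (2*n) → Bool) := L.filter (fun ℓ => (k:ℝ) - 2*Real.sqrt k ≤
        ((Finset.univ.filter (fun j : Fin (2*n) => (j:ℕ) < T ∧ ℓ j = true)).card : ℝ)) with hbad
  have hmemC : ∀ j, j ∈ Citems ↔ ((j:ℕ) < T ∧ ¬ ((σ j : ℕ) < T)) := by
    intro j; simp [hCitems, hItems]
  have hmemB : ∀ j, j ∈ Bitems ↔ ((j:ℕ) < T ∧ ((σ j : ℕ) < T)) := by
    intro j; simp [hBitems, hItems]
  have hmemR : ∀ j, j ∈ R ↔ ((j:ℕ) < ((σ j : ℕ))) := by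
    intro j; simp [hR]
  have hσval : ∀ j, ((σ j : ℕ)) ≠ (j:ℕ) := by
    intro j h
    exact hσ' j (Fin.val_injective h)
  -- membership in L
  have hLmem : ∀ ℓ ∈ L, ∀ j, ℓ (σ j) = !(ℓ j) := by
    intro ℓ hℓ
    rw [hL, Finset.mem_filter] at hℓ
    exact hℓ.2
  -- Items.card ≤ T
  have hItemsT : Items.card ≤ T := by
    calc Items.card = (Items.image Fin.val).card :=
          (Finset.card_image_of_injective _ Fin.val_injective).symm
      _ ≤ (Finset.range T).card := by
          apply Finset.card_le_card
          intro x hx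
          simp only [Finset.mem_image] at hx
          obtain ⟨j, hj, rfl⟩ := hx
          rw [hItems, Finset.mem_filter] at hj
          simpa using hj.2
      _ = T := Finset.card_range T
  have hbm : Bitems.card + Citems.card = Items.card :=
    Finset.card_filter_add_card_filter_not (p := fun j => ((σ j : ℕ) < T))
  -- within-pairs: exactly half of Bitems are samples
  have hBhalf : ∀ ℓ ∈ L, 2 * (Bitems.filter (fun j => ℓ j = true)).card = Bitems.card := by
    intro ℓ hℓ
    have hℓ' := hLmem ℓ hℓ
    have hsplit := Finset.card_filter_add_card_filter_not
      (s := Bitems) (p := fun j => ℓ j = true)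
    have hbij : (Bitems.filter (fun j => ℓ j = true)).card
        = (Bitems.filter (fun j => ¬ (ℓ j = true))).card := by
      apply Finset.card_bij (fun j _ => σ j)
      · intro a ha
        rw [Finset.mem_filter] at ha ⊢
        obtain ⟨haB, haT⟩ := ha
        rw [hmemB] at haB ⊢
        refine ⟨⟨haB.2, by rw [hσ]; exact haB.1⟩, by simp [hℓ' a, haT]⟩
      · intro a ha b hb hab
        have := congrArg σ hab
        rwa [hσ, hσ] at this
      · intro b hb
        rw [Finset.mem_filter] at hb
        obtain ⟨hbB, hbT⟩ := hb
        refine ⟨σ b, ?_, (hσ b)⟩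
        rw [Finset.mem_filter]
        rw [hmemB] at hbB ⊢
        constructor
        · exact ⟨hbB.2, by rw [hσ]; exact hbB.1⟩
        · simp only [Bool.not_eq_true] at hbT
          simp [hℓ' b, hbT]
    omega
  -- decomposition of the sample count
  have hcnt : ∀ ℓ : Fin (2*n) → Bool,
      (Finset.univ.filter (fun j : Fin (2*n) => (j:ℕ) < T ∧ ℓ j = true)).card
      = (Bitems.filter (fun j => ℓ j = true)).card + (Citems.filter (fun j => ℓ j = true)).card := by
    intro ℓ
    have hun : (Finset.univ.filter (fun j : Fin (2*n) => (j:ℕ) < T ∧ ℓ j = true))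
        = (Bitems.filter (fun j => ℓ j = true)) ∪ (Citems.filter (fun j => ℓ j = true)) := by
      ext j
      simp only [Finset.mem_filter, Finset.mem_union, Finset.mem_univ, true_and, hmemB, hmemC]
      tauto
    rw [hun, Finset.card_union_of_disjoint]
    apply Finset.disjoint_filter_filter
    apply Finset.disjoint_filter_filter_not
  -- the pattern map
  have hπBad : ∀ ℓ ∈ bad, Citems.filter (fun j => ℓ j = true) ∈ Bad := by
    intro ℓ hℓ
    rw [hbad, Finset.mem_filter] at hℓ
    obtain ⟨hℓL, hcond⟩ := hℓ
    rw [hBad, Finset.mem_filter]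
    refine ⟨Finset.mem_powerset.mpr (Finset.filter_subset _ _), ?_⟩
    have h1 := hcnt ℓ
    have h2 := hBhalf ℓ hℓL
    have h3 : ((Bitems.card : ℝ) + Citems.card) ≤ T := by
      exact_mod_cast le_trans (le_of_eq (by exact_mod_cast hbm)) (Nat.cast_le.mpr hItemsT)
    have h4 : ((Finset.univ.filter (fun j : Fin (2*n) => (j:ℕ) < T ∧ ℓ j = true)).card : ℝ)
        = (Bitems.filter (fun j => ℓ j = true)).card + (Citems.filter (fun j => ℓ j = true)).card := by
      exact_mod_cast h1
    have h5 : 2 * ((Bitems.filter (fun j => ℓ j = true)).card : ℝ) = Bitems.card := by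
      exact_mod_cast h2
    rw [h4] at hcond
    linarith
  -- |R| = n
  have hRcard : R.card = n := by
    have hcompl : Finset.univ.filter (fun j : Fin (2*n) => ¬ ((j:ℕ) < ((σ j : ℕ)))) = R.image σ := by
      ext j
      simp only [Finset.mem_filter, Finset.mem_univ, true_and, Finset.mem_image, hmemR]
      constructor
      · intro h
        refine ⟨σ j, ?_, hσ j⟩
        rw [hσ]
        have := hσval j
        omega
      · rintro ⟨r, hr, rfl⟩
        rw [hσ]
        omega
    have h1 : R.card + (Finset.univ.filter (fun j : Fin (2*n) => ¬ ((j:ℕ) < ((σ j : ℕ))))).card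
        = Fintype.card (Fin (2*n)) := by
      rw [← Finset.card_univ]
      exact Finset.card_filter_add_card_filter_not _
    rw [hcompl, Finset.card_image_of_injective _ (Function.LeftInverse.injective hσ),
      Fintype.card_fin] at h1
    omega
  -- |D| + m ≤ n
  have hDm : D.card + Citems.card ≤ n := by
    have hCreps_card : (Citems.image (fun (j : Fin (2*n)) => if (j:ℕ) < (σ j : ℕ) then j else σ j)).card
        = Citems.card := by
      apply Finset.card_image_of_injOn
      intro a ha b hb hab
      simp only [Finset.mem_coe] at ha hb
      simp only at hab
      split_ifs at hab with h1 h2 h2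
      · exact hab
      · exfalso; rw [hab, hmemC] at ha; rw [hmemC] at hb; exact hb.2 ha.1
      · exfalso; rw [← hab, hmemC] at hb; rw [hmemC] at ha; exact ha.2 hb.1
      · have := congrArg σ hab; rwa [hσ, hσ] at this
    have hsub : (Citems.image (fun (j : Fin (2*n)) => if (j:ℕ) < (σ j : ℕ) then j else σ j)) ⊆ R := by
      intro r hr
      simp only [Finset.mem_image] at hr
      obtain ⟨j, hj, rfl⟩ := hr
      rw [hmemR]
      split_ifs with h1
      · exact h1
      · rw [hσ]; have := hσval j; omega
    have hdisj : Disjoint D (Citems.image (fun (j : Fin (2*n)) => if (j:ℕ) < (σ j : ℕ) then j else σ j)) := by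
      rw [Finset.disjoint_left]
      intro r hrD hrC
      simp only [Finset.mem_image] at hrC
      obtain ⟨j, hj, rfl⟩ := hrC
      rw [hD, Finset.mem_filter] at hrD
      obtain ⟨-, h1, h2⟩ := hrD
      split_ifs at h1 h2 with hc
      · exact h1 hj
      · rw [hσ] at h2; exact h2 hj
    calc D.card + Citems.card
        = D.card + (Citems.image (fun (j : Fin (2*n)) => if (j:ℕ) < (σ j : ℕ) then j else σ j)).card := by
          rw [hCreps_card]
      _ = (D ∪ Citems.image (fun (j : Fin (2*n)) => if (j:ℕ) < (σ j : ℕ) then j else σ j)).card :=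
          (Finset.card_union_of_disjoint hdisj).symm
      _ ≤ R.card := Finset.card_le_card (Finset.union_subset (Finset.filter_subset _ _) hsub)
      _ = n := hRcard
  -- the injection
  have hinj : bad.card ≤ Bad.card * 2 ^ D.card := by
    have := Finset.card_le_card_of_injOn
      (f := fun ℓ => ((Citems.filter (fun j => ℓ j = true)), (fun d : ↥D => ℓ d.1)))
      (s := bad) (t := Bad ×ˢ (Finset.univ : Finset (↥D → Bool)))
      (by
        intro ℓ hℓ
        rw [Finset.mem_coe, Finset.mem_product]
        exact ⟨hπBad ℓ hℓ, Finset.mem_univ _⟩)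
      (by
        intro ℓ hℓ ℓ' hℓ' heq
        have hℓL : ℓ ∈ L := Finset.mem_of_mem_filter _ hℓ
        have hℓ'L : ℓ' ∈ L := Finset.mem_of_mem_filter _ hℓ'
        have hfl := hLmem ℓ hℓL
        have hfl' := hLmem ℓ' hℓ'L
        simp only [Prod.mk.injEq] at heq
        obtain ⟨h1, h2⟩ := heq
        have hC : ∀ j ∈ Citems, ℓ j = ℓ' j := by
          intro j hj
          have e : (j ∈ Citems.filter (fun j => ℓ j = true))
              = (j ∈ Citems.filter (fun j => ℓ' j = true)) := by rw [h1]
          simp only [Finset.mem_filter, hj, true_and, eq_iff_iff] at e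
          cases hb : ℓ j <;> cases hb' : ℓ' j <;> simp_all
        have hDeq : ∀ r ∈ D, ℓ r = ℓ' r := fun r hr => congrFun h2 ⟨r, hr⟩
        funext j
        by_cases hj : j ∈ Citems
        · exact hC j hj
        · by_cases hj2 : σ j ∈ Citems
          · have e1 := hfl (σ j)
            have e2 := hfl' (σ j)
            rw [hσ] at e1 e2
            rw [e1, e2, hC (σ j) hj2]
          · by_cases hjR : (j:ℕ) < (σ j : ℕ)
            · have hjD : j ∈ D := by
                rw [hD, Finset.mem_filter, hmemR]
                exact ⟨hjR, hj, hj2⟩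
              exact hDeq j hjD
            · have hjD : σ j ∈ D := by
                rw [hD, Finset.mem_filter, hmemR, hσ]
                have := hσval j
                exact ⟨by omega, hj2, hj⟩
              have e := hDeq (σ j) hjD
              have e1 := hfl (σ j)
              have e2 := hfl' (σ j)
              rw [hσ] at e1 e2
              rw [e1, e2, e])
    calc bad.card ≤ (Bad ×ˢ (Finset.univ : Finset (↥D → Bool))).card := this
      _ = Bad.card * 2 ^ D.card := by
          rw [Finset.card_product, Finset.card_univ, Fintype.card_fun]
          simp [Fintype.card_coe]
  -- final assembly
  have hpow2 : (0:ℝ) < 2 ^ n := by positivity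
  rw [div_le_iff₀ hpow2]
  have hbadR : (bad.card : ℝ) ≤ (Bad.card : ℝ) * 2 ^ D.card := by exact_mod_cast hinj
  by_cases hk : k = 0
  · -- k = 0 : RHS is 2 * 2^n, and bad.card ≤ 2^n
    subst hk
    have hBadcard : (Bad.card : ℝ) ≤ 2 ^ Citems.card := by
      have : Bad.card ≤ Citems.powerset.card := Finset.card_le_card (Finset.filter_subset _ _)
      rw [Finset.card_powerset] at this
      exact_mod_cast this
    have hexp : Real.exp (-(((0:ℕ)):ℝ) ^ ((1:ℝ)/3) / 4) = 1 := by norm_num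
    have h2 : (bad.card : ℝ) ≤ 2 ^ n := by
      calc (bad.card : ℝ) ≤ (Bad.card : ℝ) * 2 ^ D.card := hbadR
        _ ≤ 2 ^ Citems.card * 2 ^ D.card := by
            apply mul_le_mul_of_nonneg_right hBadcard (by positivity)
        _ = 2 ^ (Citems.card + D.card) := by rw [pow_add]
        _ ≤ 2 ^ n := by
            apply pow_le_pow_right₀ (by norm_num)
            omega
    have heq : (2:ℝ) * Real.exp (-(((0:ℕ)):ℝ) ^ ((1:ℝ)/3) / 4) * 2 ^ n = 2 * 2 ^ n := by
      rw [hexp]; ring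
    have hp : (0:ℝ) < 2 ^ n := by positivity
    linarith only [h2, heq, hp]
  · have hk1 : 1 ≤ k := Nat.one_le_iff_ne_zero.mpr hk
    have hk0 : (0:ℝ) < k := by exact_mod_cast hk1
    have ht1 : 1 ≤ t := by
      rw [ht_def]
      calc (1:ℝ) = 1 ^ ((2:ℝ)/3) := (Real.one_rpow _).symm
        _ ≤ (k:ℝ) ^ ((2:ℝ)/3) := by
            apply Real.rpow_le_rpow (by norm_num) (by exact_mod_cast hk1) (by norm_num)
    by_cases hm : Citems.card = 0
    · -- Bad is empty
      have hBadempty : Bad = ∅ := by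
        rw [hBad]
        apply Finset.filter_false_of_mem
        intro A hA
        rw [Finset.mem_powerset] at hA
        have : A.card ≤ Citems.card := Finset.card_le_card hA
        have hA0 : A.card = 0 := by omega
        rw [hm, hA0]
        push_cast
        intro hcon
        linarith
      have : bad.card = 0 := by
        have := hinj
        rw [hBadempty] at this
        simpa using this
      rw [this]
      push_cast
      positivity
    · -- main case
      have hm1 : 1 ≤ Citems.card := Nat.one_le_iff_ne_zero.mpr hm
      have hmR : (1:ℝ) ≤ Citems.card := by exact_mod_cast hm1
      have hBadcard := tail_bound' Citems t ht0 hm1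
      have hmT : (Citems.card : ℝ) ≤ 2 * k := by
        have h1 : (Citems.card : ℝ) ≤ T := by
          have : Citems.card ≤ T := le_trans (by omega) hItemsT
          exact_mod_cast this
        nlinarith
      have ht2 : t^2 = (k:ℝ) ^ ((4:ℝ)/3) := by
        rw [ht_def, ← Real.rpow_natCast ((k:ℝ) ^ ((2:ℝ)/3)) 2,
          ← Real.rpow_mul (Nat.cast_nonneg k)]
        norm_num
      have hdiv : (k:ℝ) ^ ((4:ℝ)/3) / (k:ℝ) = (k:ℝ) ^ ((1:ℝ)/3) := by
        rw [show ((1:ℝ)/3) = (4:ℝ)/3 - 1 by norm_num, Real.rpow_sub hk0, Real.rpow_one]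
      have hexp_le : Real.exp (-2 * t^2 / Citems.card) ≤ Real.exp (-(k:ℝ) ^ ((1:ℝ)/3) / 4) := by
        apply Real.exp_le_exp.mpr
        have hmpos : (0:ℝ) < Citems.card := by exact_mod_cast hm1
        have e1 : 2*t^2/(2*(k:ℝ)) ≤ 2*t^2/(Citems.card : ℝ) :=
          div_le_div_of_nonneg_left (by positivity) hmpos hmT
        have e2 : 2*t^2/(2*(k:ℝ)) = (k:ℝ) ^ ((1:ℝ)/3) := by
          rw [ht2, mul_div_mul_left _ _ (two_ne_zero), hdiv]
        have hknn : 0 ≤ (k:ℝ) ^ ((1:ℝ)/3) := Real.rpow_nonneg (le_of_lt hk0) _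
        have e3 : (k:ℝ) ^ ((1:ℝ)/3) ≤ 2*t^2/(Citems.card : ℝ) := e2 ▸ e1
        have e4 : -2*t^2/(Citems.card : ℝ) = -(2*t^2/(Citems.card : ℝ)) := by ring
        rw [e4]
        linarith
      calc (bad.card : ℝ) ≤ (Bad.card : ℝ) * 2 ^ D.card := hbadR
        _ ≤ (2 ^ Citems.card * Real.exp (-2 * t^2 / Citems.card)) * 2 ^ D.card := by
            apply mul_le_mul_of_nonneg_right hBadcard (by positivity)
        _ = 2 ^ (Citems.card + D.card) * Real.exp (-2 * t^2 / Citems.card) := by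
            rw [pow_add]; ring
        _ ≤ 2 ^ n * Real.exp (-(k:ℝ) ^ ((1:ℝ)/3) / 4) := by
            apply mul_le_mul (by apply pow_le_pow_right₀ (by norm_num); omega) hexp_le
              (Real.exp_pos _).le (by positivity)
        _ ≤ 2 * Real.exp (-(k:ℝ) ^ ((1:ℝ)/3) / 4) * 2 ^ n := by
            nlinarith [Real.exp_pos (-(k:ℝ) ^ ((1:ℝ)/3) / 4),
              pow_pos (show (0:ℝ) < 2 by norm_num) n]
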